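/- (Optimality condition for the KL-loss problem.) Let A be a real symmetric n×n matrix with positive entries, and let X be a real symmetric n×n positive semidefinite matrix such that the matrix Y = exp_H(X) − A (with entries exp(X_{ij}) − A_{ij}) is positive semidefinite and Tr(X Y) = 0. Then X minimizes the function f(X') = Σ_{i,j} [A_{ij}(log A_{ij} − X'_{ij}) + exp(X'_{ij}) − A_{ij}] over all real symmetric positive semidefinite n×n matrices X'. -/

import Mathlib

open Matrix

lemma psd_diag_nonneg {n : ℕ} {M : Matrix (Fin n) (Fin n) ℝ} (hM : M.PosSemidef)
    (i : Fin n) : 0 ≤ M i i := by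
  exact hM.diag_nonneg

lemma psd_trace_nonneg {n : ℕ} {M : Matrix (Fin n) (Fin n) ℝ} (hM : M.PosSemidef) :
    0 ≤ M.trace := by
  rw [Matrix.trace]
  exact Finset.sum_nonneg fun i _ => psd_diag_nonneg hM i

lemma trace_mul_psd_nonneg {n : ℕ} {M N : Matrix (Fin n) (Fin n) ℝ}
    (hM : M.PosSemidef) (hN : N.PosSemidef) : 0 ≤ (M * N).trace := by
  obtain ⟨B, rfl⟩ : ∃ B : Matrix (Fin n) (Fin n) ℝ, N = Bᴴ * B := by
    open scoped MatrixOrder in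
    obtain ⟨B, hB⟩ := CStarAlgebra.nonneg_iff_eq_star_mul_self.mp hN.nonneg
    exact ⟨B, hB⟩
  have h1 : (M * (Bᴴ * B)).trace = (B * M * Bᴴ).trace := by
    rw [← Matrix.mul_assoc, Matrix.trace_mul_cycle]
  rw [h1]
  exact psd_trace_nonneg (hM.mul_mul_conjTranspose_same B)

/-- Optimality condition for the KL-loss problem: if `X ⪰ 0`,
`Y = exp_H(X) - A ⪰ 0` and `Tr(X Y) = 0`, then `X` minimizes the KL loss over all
positive semidefinite matrices. -/
theorem klLoss_optimality (n : ℕ) (A X : Matrix (Fin n) (Fin n) ℝ)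
    (hAsymm : A.IsSymm) (hApos : ∀ i j, 0 < A i j)
    (hX : X.PosSemidef)
    (hY : (Matrix.of (fun i j => Real.exp (X i j) - A i j)).PosSemidef)
    (htr : Matrix.trace (X * Matrix.of (fun i j => Real.exp (X i j) - A i j)) = 0) :
    ∀ X' : Matrix (Fin n) (Fin n) ℝ, X'.PosSemidef →
      (∑ i, ∑ j, (A i j * (Real.log (A i j) - X i j) + Real.exp (X i j) - A i j)) ≤
      ∑ i, ∑ j, (A i j * (Real.log (A i j) - X' i j) + Real.exp (X' i j) - A i j) := by
  intro X' hX'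
  set Y : Matrix (Fin n) (Fin n) ℝ := Matrix.of (fun i j => Real.exp (X i j) - A i j) with hYdef
  have hYsymm : Y.IsSymm := hY.1.symm ▸ hY.isHermitian.eq ▸ hY.isHermitian
  -- key pointwise inequality
  have key : ∀ i j, Y i j * (X' i j - X i j) ≤
      (A i j * (Real.log (A i j) - X' i j) + Real.exp (X' i j) - A i j) -
      (A i j * (Real.log (A i j) - X i j) + Real.exp (X i j) - A i j) := by
    intro i j
    have hexp : Real.exp (X i j) * (X' i j - X i j) ≤ Real.exp (X' i j) - Real.exp (X i j) := by
      have h := Real.add_one_le_exp (X' i j - X i j)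
      have := mul_le_mul_of_nonneg_left h (Real.exp_nonneg (X i j))
      rw [← Real.exp_add] at this
      have h2 : X i j + (X' i j - X i j) = X' i j := by ring
      rw [h2] at this
      nlinarith [Real.exp_pos (X i j)]
    simp only [hYdef, Matrix.of_apply]
    nlinarith
  -- sum of Y i j * X i j = trace (X * Y) = 0 (using symmetry of Y)
  have htrX : ∑ i, ∑ j, Y i j * X i j = 0 := by
    have : Matrix.trace (X * Y) = ∑ i, ∑ j, X i j * Y j i := by
      simp [Matrix.trace, Matrix.mul_apply, Matrix.diag]
    rw [this] at htr
    calc ∑ i, ∑ j, Y i j * X i j = ∑ i, ∑ j, X i j * Y j i := by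
          refine Finset.sum_congr rfl fun i _ => Finset.sum_congr rfl fun j _ => ?_
          rw [← hYsymm.apply j i]
          ring
      _ = 0 := htr
  have htrX' : 0 ≤ ∑ i, ∑ j, Y i j * X' i j := by
    have h := trace_mul_psd_nonneg hY hX'
    have : Matrix.trace (Y * X') = ∑ i, ∑ j, Y i j * X' i j := by
      rw [show Matrix.trace (Y * X') = ∑ i, ∑ j, Y i j * X' j i by
        simp [Matrix.trace, Matrix.mul_apply, Matrix.diag]]
      refine Finset.sum_congr rfl fun i _ => Finset.sum_congr rfl fun j _ => ?_
      have hs : X' j i = X' i j := by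
        have := congrFun (congrFun hX'.isHermitian.eq i) j
        simpa [Matrix.conjTranspose_apply] using this
      rw [hs]
    rw [this] at h
    exact h
  have hsum : 0 ≤ ∑ i, ∑ j, Y i j * (X' i j - X i j) := by
    have : ∑ i, ∑ j, Y i j * (X' i j - X i j) =
        (∑ i, ∑ j, Y i j * X' i j) - ∑ i, ∑ j, Y i j * X i j := by
      rw [← Finset.sum_sub_distrib]
      refine Finset.sum_congr rfl fun i _ => ?_
      rw [← Finset.sum_sub_distrib]
      exact Finset.sum_congr rfl fun j _ => by ring
    rw [this, htrX, sub_zero]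
    exact htrX'
  have := Finset.sum_le_sum fun i (_ : i ∈ Finset.univ) =>
    Finset.sum_le_sum fun j (_ : j ∈ Finset.univ) => key i j
  have hdiff : 0 ≤ (∑ i, ∑ j, (A i j * (Real.log (A i j) - X' i j) + Real.exp (X' i j) - A i j)) -
      ∑ i, ∑ j, (A i j * (Real.log (A i j) - X i j) + Real.exp (X i j) - A i j) := by
    calc (0:ℝ) ≤ ∑ i, ∑ j, Y i j * (X' i j - X i j) := hsum
      _ ≤ _ := by
          refine le_trans this (le_of_eq ?_)
          rw [← Finset.sum_sub_distrib]
          refine Finset.sum_congr rfl fun i _ => ?_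
          rw [← Finset.sum_sub_distrib]
  linarith
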